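/- arXiv:math/0607410 — 2 statements merged into one kernel-verified Lean document; each statement's English description precedes it below -/
import Mathlib

section
/- Hyperdeterminantal representation of Selberg's integral: Let n ≥ 1 and k ≥ 1 be integers and a, b > 0 real. Then 𝒮_n(a,b;k) = n! · Det(S), where S is the hypermatrix of order 2k and dimension n with entries S(i₁,…,i_{2k}) = B(a + i₁+⋯+i_{2k}, b) for indices i₁,…,i_{2k} ∈ {0,…,n−1}. -/
open MeasureTheory Nat

/-- The Vandermonde product `Δ(x) = ∏_{i<j} (x_j - x_i)`. -/
def vandermonde {n : ℕ} (x : Fin n → ℝ) : ℝ :=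
  ∏ p ∈ Finset.univ.filter (fun p : Fin n × Fin n => p.1 < p.2), (x p.2 - x p.1)

/-- Selberg's integral `𝒮ₙ(a,b;k)` for integer exponent `k`. -/
noncomputable def selberg (n k : ℕ) (a b : ℝ) : ℝ :=
  ∫ x : Fin n → ℝ in Set.univ.pi (fun _ => Set.Icc (0:ℝ) 1),
    vandermonde x ^ (2 * k) * ∏ i, x i ^ (a - 1) * (1 - x i) ^ (b - 1)

/-- The Euler Beta function `B(a,b) = ∫₀¹ x^{a-1} (1-x)^{b-1} dx`. -/
noncomputable def betaFn (a b : ℝ) : ℝ :=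
  ∫ x in (0:ℝ)..1, x ^ (a - 1) * (1 - x) ^ (b - 1)

/-- The hyperdeterminant of a hypermatrix of order `m` and dimension `n`. -/
noncomputable def hypDet {m n : ℕ} (M : (Fin m → Fin n) → ℝ) : ℝ :=
  (1 / (n ! : ℝ)) * ∑ σ : Fin m → Equiv.Perm (Fin n),
    (∏ s, ((Equiv.Perm.sign (σ s) : ℤ) : ℝ)) * ∏ i, M fun s => σ s i

section Aux

/-- Integrability of the Beta integrand. -/
lemma betaIntegrand_integrableOn {a b : ℝ} (ha : 0 < a) (hb : 0 < b) :
    IntegrableOn (fun t : ℝ => t ^ (a - 1) * (1 - t) ^ (b - 1)) (Set.Ioc 0 1) := by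
  have h := Complex.betaIntegral_convergent (u := (a : ℂ)) (v := (b : ℂ))
    (by simpa using ha) (by simpa using hb)
  rw [intervalIntegrable_iff_integrableOn_Ioc_of_le zero_le_one] at h
  have h2 : IntegrableOn (fun t : ℝ => ((t ^ (a - 1) * (1 - t) ^ (b - 1) : ℝ) : ℂ))
      (Set.Ioc 0 1) := by
    refine h.congr_fun ?_ measurableSet_Ioc
    intro t ht
    have h0 : (0:ℝ) ≤ t := le_of_lt ht.1
    have h1 : (0:ℝ) ≤ 1 - t := by linarith [ht.2]
    push_cast
    rw [Complex.ofReal_cpow h0, Complex.ofReal_cpow h1]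
    push_cast
    ring
  simpa [IntegrableOn] using h2.re

lemma pow_mul_beta_eqOn (a b : ℝ) (e : ℕ) :
    Set.EqOn (fun t : ℝ => t ^ e * (t ^ (a - 1) * (1 - t) ^ (b - 1)))
      (fun t : ℝ => t ^ (a + e - 1) * (1 - t) ^ (b - 1)) (Set.Ioc 0 1) := by
  intro t ht
  have h0 : (0:ℝ) < t := ht.1
  simp only
  rw [← Real.rpow_natCast t e, ← mul_assoc, ← Real.rpow_add h0,
    show (e : ℝ) + (a - 1) = a + e - 1 by ring]

lemma f_integrableOn {a b : ℝ} (ha : 0 < a) (hb : 0 < b) (e : ℕ) :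
    IntegrableOn (fun t : ℝ => t ^ e * (t ^ (a - 1) * (1 - t) ^ (b - 1))) (Set.Icc 0 1) := by
  rw [integrableOn_Icc_iff_integrableOn_Ioc]
  have h := betaIntegrand_integrableOn (a := a + e) (b := b)
    (by positivity) hb
  exact h.congr_fun (pow_mul_beta_eqOn a b e).symm measurableSet_Ioc

lemma f_integral {a b : ℝ} (ha : 0 < a) (hb : 0 < b) (e : ℕ) :
    ∫ t in Set.Icc (0:ℝ) 1, t ^ e * (t ^ (a - 1) * (1 - t) ^ (b - 1)) = betaFn (a + e) b := by
  rw [MeasureTheory.integral_Icc_eq_integral_Ioc,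
    setIntegral_congr_fun measurableSet_Ioc (pow_mul_beta_eqOn a b e),
    betaFn, intervalIntegral.integral_of_le zero_le_one]

lemma vandermonde_eq_sum {n : ℕ} (x : Fin n → ℝ) :
    vandermonde x
      = ∑ τ : Equiv.Perm (Fin n), ((Equiv.Perm.sign τ : ℤ) : ℝ) * ∏ i, x i ^ ((τ i : ℕ)) := by
  have h1 : vandermonde x = (Matrix.transpose (Matrix.vandermonde x)).det := by
    rw [Matrix.det_transpose, Matrix.det_vandermonde, vandermonde]
    exact Finset.prod_finset_product' (Finset.univ.filter fun p : Fin n × Fin n => p.1 < p.2)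
      Finset.univ (fun i => Finset.Ioi i) (fun p => by simp) (f := fun i j => x j - x i)
  rw [h1, Matrix.det_apply']
  refine Finset.sum_congr rfl fun τ _ => ?_
  simp [Matrix.vandermonde, Equiv.Perm.sign]

end Aux

/-- Hyperdeterminantal representation of Selberg's integral:
`𝒮ₙ(a,b;k) = n! Det(B(a + i₁ + ⋯ + i₂ₖ, b))`. -/
theorem selberg_hyperdeterminant (n k : ℕ) (hn : 1 ≤ n) (hk : 1 ≤ k)
    (a b : ℝ) (ha : 0 < a) (hb : 0 < b) :
    selberg n k a b =
      (n ! : ℝ) *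
        hypDet (fun t : Fin (2 * k) → Fin n => betaFn (a + ∑ s, (t s : ℕ)) b) := by
  classical
  set S : Set (Fin n → ℝ) := Set.univ.pi (fun _ => Set.Icc (0:ℝ) 1) with hSdef
  have hS : MeasurableSet S := MeasurableSet.univ_pi fun _ => measurableSet_Icc
  -- pointwise expansion of the integrand
  have key : ∀ x : Fin n → ℝ,
      vandermonde x ^ (2 * k) * ∏ i, x i ^ (a - 1) * (1 - x i) ^ (b - 1)
        = ∑ σ : Fin (2 * k) → Equiv.Perm (Fin n),
            (∏ s, ((Equiv.Perm.sign (σ s) : ℤ) : ℝ)) *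
              ∏ i, (x i ^ (∑ s, ((σ s i : ℕ))) *
                (x i ^ (a - 1) * (1 - x i) ^ (b - 1))) := by
    intro x
    rw [vandermonde_eq_sum]
    have hpow : (∑ τ : Equiv.Perm (Fin n),
        ((Equiv.Perm.sign τ : ℤ) : ℝ) * ∏ i, x i ^ ((τ i : ℕ))) ^ (2 * k)
        = ∏ _s : Fin (2 * k), ∑ τ : Equiv.Perm (Fin n),
            ((Equiv.Perm.sign τ : ℤ) : ℝ) * ∏ i, x i ^ ((τ i : ℕ)) := by
      rw [Finset.prod_const, Finset.card_univ, Fintype.card_fin]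
    rw [hpow, Fintype.prod_sum, Finset.sum_mul]
    refine Finset.sum_congr rfl fun σ _ => ?_
    rw [Finset.prod_mul_distrib, mul_assoc]
    congr 1
    rw [Finset.prod_comm, ← Finset.prod_mul_distrib]
    refine Finset.prod_congr rfl fun i _ => ?_
    rw [Finset.prod_pow_eq_pow_sum]
  -- indicator expansion
  have ind : ∀ x : Fin n → ℝ,
      S.indicator (fun x => vandermonde x ^ (2 * k)
          * ∏ i, x i ^ (a - 1) * (1 - x i) ^ (b - 1)) x
        = ∑ σ : Fin (2 * k) → Equiv.Perm (Fin n),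
            (∏ s, ((Equiv.Perm.sign (σ s) : ℤ) : ℝ)) *
              ∏ i, (Set.Icc (0:ℝ) 1).indicator
                (fun t => t ^ (∑ s, ((σ s i : ℕ))) * (t ^ (a - 1) * (1 - t) ^ (b - 1)))
                (x i) := by
    intro x
    by_cases hx : x ∈ S
    · rw [Set.indicator_of_mem hx, key x]
      refine Finset.sum_congr rfl fun σ _ => ?_
      congr 1
      refine Finset.prod_congr rfl fun i _ => ?_
      exact (Set.indicator_of_mem (hx i (Set.mem_univ i))
        (fun t => t ^ (∑ s, ((σ s i : ℕ))) * (t ^ (a - 1) * (1 - t) ^ (b - 1)))).symm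
    · rw [Set.indicator_of_notMem hx]
      rw [hSdef, Set.mem_pi] at hx
      push_neg at hx
      obtain ⟨i, -, hi⟩ := hx
      refine (Finset.sum_eq_zero fun σ _ => ?_).symm
      rw [Finset.prod_eq_zero (Finset.mem_univ i) (Set.indicator_of_notMem hi _), mul_zero]
  have step1 : selberg n k a b
      = ∑ σ : Fin (2 * k) → Equiv.Perm (Fin n),
          (∏ s, ((Equiv.Perm.sign (σ s) : ℤ) : ℝ)) *
            ∏ i : Fin n, betaFn (a + (∑ s, ((σ s i : ℕ)) : ℕ)) b := by
    rw [selberg, ← integral_indicator hS]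
    rw [show (fun x : Fin n → ℝ => S.indicator (fun x => vandermonde x ^ (2 * k)
        * ∏ i, x i ^ (a - 1) * (1 - x i) ^ (b - 1)) x)
      = fun x => ∑ σ : Fin (2 * k) → Equiv.Perm (Fin n),
          (∏ s, ((Equiv.Perm.sign (σ s) : ℤ) : ℝ)) *
            ∏ i, (Set.Icc (0:ℝ) 1).indicator
              (fun t => t ^ (∑ s, ((σ s i : ℕ))) * (t ^ (a - 1) * (1 - t) ^ (b - 1)))
              (x i) from funext ind]
    have hint : ∀ σ : Fin (2 * k) → Equiv.Perm (Fin n),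
        Integrable (fun x : Fin n → ℝ =>
          (∏ s, ((Equiv.Perm.sign (σ s) : ℤ) : ℝ)) *
            ∏ i, (Set.Icc (0:ℝ) 1).indicator
              (fun t => t ^ (∑ s, ((σ s i : ℕ))) * (t ^ (a - 1) * (1 - t) ^ (b - 1)))
              (x i)) := by
      intro σ
      refine Integrable.const_mul ?_ _
      refine Integrable.fintype_prod_dep (𝕜 := ℝ) fun i => ?_
      exact (integrable_indicator_iff measurableSet_Icc).mpr (f_integrableOn ha hb _)
    rw [integral_finset_sum _ fun σ _ => hint σ]
    refine Finset.sum_congr rfl fun σ _ => ?_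
    rw [MeasureTheory.integral_const_mul]
    congr 1
    rw [volume_pi, MeasureTheory.integral_fintype_prod_eq_prod (ι := Fin n)
      (f := fun i t => (Set.Icc (0:ℝ) 1).indicator
        (fun t => t ^ (∑ s, ((σ s i : ℕ))) * (t ^ (a - 1) * (1 - t) ^ (b - 1))) t)]
    refine Finset.prod_congr rfl fun i _ => ?_
    rw [integral_indicator measurableSet_Icc]
    exact f_integral ha hb _
  rw [step1, hypDet, ← mul_assoc, mul_one_div, div_self (by
    exact_mod_cast (Nat.factorial_ne_zero n)), one_mul]
end

section
/- Hyperdeterminantal representation of Aomoto's integral: Let n ≥ 1 and k ≥ 1 be integers, a, b > 0 real and y ∈ ℝ. Then 𝒜_n^{a,b;k}(y) = n! · Det(A), where A is the hypermatrix of order 2k and dimension n with entries A(i₁,…,i_{2k}) = B(a + s, b) · ( y − (a + s)/(a + b + s) ) with s = i₁+⋯+i_{2k}, for indices i₁,…,i_{2k} ∈ {0,…,n−1}. -/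
open MeasureTheory Nat

/-- Aomoto's integral `𝒜ₙ^{a,b;k}(y)` for integer exponent `k`. -/
noncomputable def aomoto (n k : ℕ) (a b y : ℝ) : ℝ :=
  ∫ x : Fin n → ℝ in Set.univ.pi (fun _ => Set.Icc (0:ℝ) 1),
    vandermonde x ^ (2 * k) * ∏ i, (y - x i) * x i ^ (a - 1) * (1 - x i) ^ (b - 1)

/-! ### Auxiliary lemmas -/

lemma betaFn_complex (c b : ℝ) :
    ((betaFn c b : ℝ) : ℂ) = Complex.betaIntegral c b := by
  rw [betaFn, Complex.betaIntegral, ← intervalIntegral.integral_ofReal]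
  refine intervalIntegral.integral_congr (fun x hx => ?_)
  rw [Set.uIcc_of_le (by norm_num : (0:ℝ) ≤ 1)] at hx
  obtain ⟨hx0, hx1⟩ := hx
  push_cast
  rw [Complex.ofReal_cpow hx0, Complex.ofReal_cpow (by linarith)]
  push_cast
  ring

lemma betaFn_rec {c b : ℝ} (hc : 0 < c) (hb : 0 < b) :
    betaFn (c + 1) b = c / (c + b) * betaFn c b := by
  apply Complex.ofReal_inj.mp
  rw [betaFn_complex]
  have hrhs : ((c / (c + b) * betaFn c b : ℝ) : ℂ)
      = ((c:ℂ) / ((c:ℂ) + b)) * Complex.betaIntegral c b := by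
    rw [← betaFn_complex]; push_cast; ring
  rw [hrhs]
  have hcre : 0 < (c:ℂ).re := by simpa using hc
  have hbre : 0 < (b:ℂ).re := by simpa using hb
  have hc1re : 0 < ((c:ℂ)+1).re := by simpa using by linarith
  have e1 := Complex.Gamma_mul_Gamma_eq_betaIntegral hcre hbre
  have e2 := Complex.Gamma_mul_Gamma_eq_betaIntegral hc1re hbre
  have hG : Complex.Gamma ((c:ℂ) + b) ≠ 0 := by
    apply Complex.Gamma_ne_zero
    intro m h
    have hre : (c + b : ℝ) = -(m : ℝ) := by
      have := congrArg Complex.re h; simpa using this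
    have h0 : (0:ℝ) < c + b := by linarith
    rw [hre] at h0
    have : (0:ℝ) ≤ (m:ℝ) := Nat.cast_nonneg m
    linarith
  have hcb : (c:ℂ) + b ≠ 0 := by
    intro h
    have := congrArg Complex.re h
    simp at this
    linarith
  have hgadd : Complex.Gamma ((c:ℂ) + 1) = c * Complex.Gamma c :=
    Complex.Gamma_add_one (c:ℂ) (by
      intro h
      have := congrArg Complex.re h
      simp at this
      linarith)
  have hgadd2 : Complex.Gamma ((c:ℂ) + 1 + b) = ((c:ℂ) + b) * Complex.Gamma ((c:ℂ) + b) := by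
    have := Complex.Gamma_add_one ((c:ℂ) + b) hcb
    rw [← this]; ring_nf
  rw [hgadd, hgadd2] at e2
  have hcast : ((c+1 : ℝ):ℂ) = (c:ℂ) + 1 := by push_cast; ring
  rw [hcast]
  have hne : ((c:ℂ)+b) * Complex.Gamma ((c:ℂ)+b) ≠ 0 := mul_ne_zero hcb hG
  apply mul_left_cancel₀ hne
  calc ((c:ℂ)+b) * Complex.Gamma ((c:ℂ)+b) * Complex.betaIntegral ((c:ℂ)+1) b
      = (c:ℂ) * (Complex.Gamma (c:ℂ) * Complex.Gamma (b:ℂ)) := by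
        rw [mul_comm ((c:ℂ)) (Complex.Gamma (c:ℂ))] at e2
        linear_combination -e2
    _ = (c:ℂ) * (Complex.Gamma ((c:ℂ)+b) * Complex.betaIntegral (c:ℂ) b) := by rw [e1]
    _ = Complex.Gamma ((c:ℂ)+b) * Complex.betaIntegral (c:ℂ) b * ((c:ℂ)/((c:ℂ)+b) * ((c:ℂ)+b)) := by
        rw [div_mul_cancel₀ _ hcb]; ring
    _ = ((c:ℂ)+b) * Complex.Gamma ((c:ℂ)+b) * ((c:ℂ)/((c:ℂ)+b) * Complex.betaIntegral (c:ℂ) b) := by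
        ring

lemma betaKernel_integrableOn {c b : ℝ} (hc : 0 < c) (hb : 0 < b) :
    IntegrableOn (fun x : ℝ => x ^ (c - 1) * (1 - x) ^ (b - 1)) (Set.Icc 0 1) volume := by
  rw [integrableOn_Icc_iff_integrableOn_Ioc]
  have hC := Complex.betaIntegral_convergent (u := (c:ℂ)) (v := (b:ℂ))
    (by simpa using hc) (by simpa using hb)
  rw [intervalIntegrable_iff, Set.uIoc_of_le (by norm_num : (0:ℝ) ≤ 1)] at hC
  have hre : IntegrableOn
      (fun x : ℝ => ((x:ℂ) ^ ((c:ℂ) - 1) * (1 - (x:ℂ)) ^ ((b:ℂ) - 1)).re)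
      (Set.Ioc 0 1) volume := Complex.reCLM.integrable_comp hC
  refine hre.congr_fun (fun x hx => ?_) measurableSet_Ioc
  obtain ⟨hx0, hx1⟩ := hx
  have h1 : ((c:ℂ) - 1) = ((c - 1 : ℝ) : ℂ) := by push_cast; ring
  have h2 : ((b:ℂ) - 1) = ((b - 1 : ℝ) : ℂ) := by push_cast; ring
  have h3 : (1 - (x:ℂ)) = ((1 - x : ℝ) : ℂ) := by push_cast; ring
  beta_reduce
  rw [h1, h2, h3, ← Complex.ofReal_cpow hx0.le, ← Complex.ofReal_cpow (by linarith),
    ← Complex.ofReal_mul, Complex.ofReal_re]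

lemma betaKernel_integral (c b : ℝ) :
    ∫ x in Set.Icc (0:ℝ) 1, x ^ (c - 1) * (1 - x) ^ (b - 1) = betaFn c b := by
  rw [integral_Icc_eq_integral_Ioc, betaFn,
    intervalIntegral.integral_of_le (by norm_num : (0:ℝ) ≤ 1)]

lemma onedim_eqOn {a b : ℝ} (ha : 0 < a) (y : ℝ) (e : ℕ) :
    Set.EqOn (fun x : ℝ => (y - x) * x ^ (a - 1) * (1 - x) ^ (b - 1) * x ^ e)
      (fun x : ℝ => y * (x ^ ((a + e) - 1) * (1 - x) ^ (b - 1))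
        - x ^ ((a + e + 1) - 1) * (1 - x) ^ (b - 1)) (Set.Icc 0 1) := by
  intro x hx
  simp only
  rcases eq_or_lt_of_le hx.1 with h0 | h0
  · rw [← h0]
    rcases Nat.eq_zero_or_pos e with he | he
    · subst he
      simp only [Nat.cast_zero, add_zero, pow_zero, mul_one]
      rw [show a + 1 - 1 = a by ring, Real.zero_rpow (ne_of_gt ha)]
      ring
    · have h1 : (1:ℝ) ≤ (e:ℝ) := by exact_mod_cast he
      rw [zero_pow (Nat.one_le_iff_ne_zero.mp he)]
      rw [Real.zero_rpow (by linarith : a + (e:ℝ) - 1 ≠ 0),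
        Real.zero_rpow (by linarith : a + (e:ℝ) + 1 - 1 ≠ 0)]
      ring
  · have e1 : x ^ (a + (e:ℝ) - 1) = x ^ (a - 1) * x ^ ((e:ℕ) : ℝ) := by
      rw [← Real.rpow_add h0]
      congr 1
      ring
    have e2 : x ^ (a + (e:ℝ) + 1 - 1) = x * (x ^ (a - 1) * x ^ ((e:ℕ) : ℝ)) := by
      rw [show a + (e:ℝ) + 1 - 1 = 1 + (a + (e:ℝ) - 1) by ring, Real.rpow_add h0,
        Real.rpow_one, e1]
    rw [← Real.rpow_natCast x e, e1, e2]
    ring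

lemma onedim_integrableOn {a b : ℝ} (ha : 0 < a) (hb : 0 < b) (y : ℝ) (e : ℕ) :
    IntegrableOn (fun x : ℝ => (y - x) * x ^ (a - 1) * (1 - x) ^ (b - 1) * x ^ e)
      (Set.Icc 0 1) volume := by
  have hc : (0:ℝ) < a + e := by positivity
  have hc1 : (0:ℝ) < a + e + 1 := by positivity
  have h : IntegrableOn (fun x : ℝ => y * (x ^ ((a + e) - 1) * (1 - x) ^ (b - 1))
      - x ^ ((a + e + 1) - 1) * (1 - x) ^ (b - 1)) (Set.Icc 0 1) volume :=
    ((betaKernel_integrableOn hc hb).const_mul y).sub (betaKernel_integrableOn hc1 hb)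
  exact h.congr_fun (fun x hx => (onedim_eqOn ha y e hx).symm) measurableSet_Icc

lemma onedim_integral {a b : ℝ} (ha : 0 < a) (hb : 0 < b) (y : ℝ) (e : ℕ) :
    ∫ x in Set.Icc (0:ℝ) 1, (y - x) * x ^ (a - 1) * (1 - x) ^ (b - 1) * x ^ e
      = betaFn (a + e) b * (y - (a + e) / (a + b + e)) := by
  have hc : (0:ℝ) < a + e := by positivity
  have hc1 : (0:ℝ) < a + e + 1 := by positivity
  rw [setIntegral_congr_fun measurableSet_Icc (onedim_eqOn ha y e)]
  rw [integral_sub ((betaKernel_integrableOn hc hb).const_mul y) (betaKernel_integrableOn hc1 hb),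
    integral_const_mul, betaKernel_integral, betaKernel_integral, betaFn_rec hc hb]
  have : a + b + (e:ℝ) = a + (e:ℝ) + b := by ring
  rw [this]
  ring

lemma restrict_pi_Icc (n : ℕ) :
    (volume : Measure (Fin n → ℝ)).restrict (Set.univ.pi fun _ => Set.Icc (0:ℝ) 1)
      = Measure.pi (fun _ : Fin n => volume.restrict (Set.Icc (0:ℝ) 1)) := by
  refine (Measure.pi_eq fun s hs => ?_).symm
  rw [Measure.restrict_apply (MeasurableSet.univ_pi hs), ← Set.pi_inter_distrib,
    volume_pi, Measure.pi_pi]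
  congr 1
  ext i
  rw [Measure.restrict_apply (hs i)]

lemma integrableOn_pi_prod {n : ℕ} (f : Fin n → ℝ → ℝ)
    (hf : ∀ i, IntegrableOn (f i) (Set.Icc (0:ℝ) 1) volume) :
    IntegrableOn (fun x : Fin n → ℝ => ∏ i, f i (x i))
      (Set.univ.pi fun _ => Set.Icc (0:ℝ) 1) volume := by
  rw [IntegrableOn, restrict_pi_Icc]
  exact Integrable.fintype_prod (f := f)
    (μ := fun _ => volume.restrict (Set.Icc (0:ℝ) 1)) hf

lemma integral_pi_prod {n : ℕ} (f : Fin n → ℝ → ℝ) :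
    ∫ x : Fin n → ℝ in Set.univ.pi (fun _ => Set.Icc (0:ℝ) 1), ∏ i, f i (x i)
      = ∏ i, ∫ x in Set.Icc (0:ℝ) 1, f i x := by
  rw [show (∫ x : Fin n → ℝ in Set.univ.pi (fun _ => Set.Icc (0:ℝ) 1), ∏ i, f i (x i))
      = ∫ x : Fin n → ℝ, (∏ i, f i (x i))
          ∂(Measure.pi (fun _ : Fin n => volume.restrict (Set.Icc (0:ℝ) 1))) by
    rw [← restrict_pi_Icc]]
  exact MeasureTheory.integral_fintype_prod_eq_prod (E := fun _ => ℝ) f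
    (μ := fun _ => volume.restrict (Set.Icc (0:ℝ) 1))

lemma vandermonde_eq_det {n : ℕ} (x : Fin n → ℝ) :
    vandermonde x = (Matrix.vandermonde x).det := by
  rw [Matrix.det_vandermonde, vandermonde, Finset.prod_sigma']
  refine Finset.prod_bij' (fun p _ => ⟨p.1, p.2⟩) (fun s _ => (s.1, s.2)) ?_ ?_ ?_ ?_ ?_
  · intro p hp
    simp only [Finset.mem_filter, Finset.mem_univ, true_and] at hp
    simp [Finset.mem_sigma, Finset.mem_Ioi, hp]
  · intro s hs
    simp only [Finset.mem_sigma, Finset.mem_univ, true_and, Finset.mem_Ioi] at hs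
    simp [Finset.mem_filter, hs]
  · intro p _; rfl
  · intro s _; rfl
  · intro p _; rfl

lemma vandermonde_expand {n : ℕ} (x : Fin n → ℝ) :
    vandermonde x = ∑ σ : Equiv.Perm (Fin n),
      ((Equiv.Perm.sign σ : ℤ) : ℝ) * ∏ i, x i ^ ((σ i : ℕ)) := by
  rw [vandermonde_eq_det, ← Matrix.det_transpose, Matrix.det_apply']
  refine Finset.sum_congr rfl fun σ _ => ?_
  congr 1

lemma vandermonde_pow_expand {n m : ℕ} (x : Fin n → ℝ) (w : Fin n → ℝ) :
    vandermonde x ^ m * ∏ i, w i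
      = ∑ σ : Fin m → Equiv.Perm (Fin n),
          (∏ s, ((Equiv.Perm.sign (σ s) : ℤ) : ℝ))
            * ∏ i, (w i * x i ^ (∑ s, ((σ s i : ℕ)))) := by
  have h1 : vandermonde x ^ m = ∏ _s : Fin m, vandermonde x := by
    rw [Finset.prod_const, Finset.card_univ, Fintype.card_fin]
  rw [h1]
  simp_rw [vandermonde_expand]
  rw [Finset.prod_univ_sum (fun _ => Finset.univ)
    (fun (s : Fin m) (σ : Equiv.Perm (Fin n)) =>
      ((Equiv.Perm.sign σ : ℤ) : ℝ) * ∏ i, x i ^ ((σ i : ℕ))),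
    Fintype.piFinset_univ, Finset.sum_mul]
  refine Finset.sum_congr rfl fun σ _ => ?_
  rw [Finset.prod_mul_distrib]
  rw [Finset.prod_comm (f := fun s i => x i ^ ((σ s i : ℕ)))]
  simp_rw [Finset.prod_pow_eq_pow_sum]
  rw [Finset.prod_mul_distrib]
  ring

/-- Hyperdeterminantal representation of Aomoto's integral:
`𝒜ₙ^{a,b;k}(y) = n! Det(B(a+s,b) (y - (a+s)/(a+b+s)))` with `s = i₁ + ⋯ + i₂ₖ`. -/
theorem aomoto_hyperdeterminant (n k : ℕ) (hn : 1 ≤ n) (hk : 1 ≤ k)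
    (a b : ℝ) (ha : 0 < a) (hb : 0 < b) (y : ℝ) :
    aomoto n k a b y =
      (n ! : ℝ) *
        hypDet (fun t : Fin (2 * k) → Fin n =>
          betaFn (a + ∑ s, (t s : ℕ)) b *
            (y - (a + ∑ s, (t s : ℕ)) / (a + b + ∑ s, (t s : ℕ)))) := by
  classical
  rw [aomoto]
  have hexp : ∀ x : Fin n → ℝ,
      vandermonde x ^ (2 * k) * ∏ i, (y - x i) * x i ^ (a - 1) * (1 - x i) ^ (b - 1)
        = ∑ σ : Fin (2 * k) → Equiv.Perm (Fin n),
            (∏ s, ((Equiv.Perm.sign (σ s) : ℤ) : ℝ)) *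
              ∏ i, ((y - x i) * x i ^ (a - 1) * (1 - x i) ^ (b - 1)
                * x i ^ (∑ s, ((σ s i : ℕ)))) :=
    fun x => vandermonde_pow_expand x (fun i => (y - x i) * x i ^ (a - 1) * (1 - x i) ^ (b - 1))
  simp_rw [hexp]
  have hInt : ∀ σ : Fin (2 * k) → Equiv.Perm (Fin n),
      Integrable (fun x : Fin n → ℝ =>
          (∏ s, ((Equiv.Perm.sign (σ s) : ℤ) : ℝ)) *
            ∏ i, ((y - x i) * x i ^ (a - 1) * (1 - x i) ^ (b - 1)
              * x i ^ (∑ s, ((σ s i : ℕ)))))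
        (volume.restrict (Set.univ.pi fun _ => Set.Icc (0:ℝ) 1)) := by
    intro σ
    exact (integrableOn_pi_prod
        (fun i t => (y - t) * t ^ (a - 1) * (1 - t) ^ (b - 1) * t ^ (∑ s, ((σ s i : ℕ))))
        (fun i => onedim_integrableOn ha hb y _)).const_mul _
  rw [integral_finset_sum Finset.univ (fun σ _ => hInt σ)]
  have hterm : ∀ σ : Fin (2 * k) → Equiv.Perm (Fin n),
      (∫ x : Fin n → ℝ in Set.univ.pi (fun _ => Set.Icc (0:ℝ) 1),
          (∏ s, ((Equiv.Perm.sign (σ s) : ℤ) : ℝ)) *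
            ∏ i, ((y - x i) * x i ^ (a - 1) * (1 - x i) ^ (b - 1)
              * x i ^ (∑ s, ((σ s i : ℕ)))))
        = (∏ s, ((Equiv.Perm.sign (σ s) : ℤ) : ℝ)) *
            ∏ i, (betaFn (a + (∑ s, ((σ s i : ℕ)))) b
              * (y - (a + (∑ s, ((σ s i : ℕ)))) / (a + b + (∑ s, ((σ s i : ℕ)))))) := by
    intro σ
    rw [integral_const_mul]
    congr 1
    rw [integral_pi_prod
      (fun i t => (y - t) * t ^ (a - 1) * (1 - t) ^ (b - 1) * t ^ (∑ s, ((σ s i : ℕ))))]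
    exact Finset.prod_congr rfl fun i _ => onedim_integral ha hb y _
  simp_rw [hterm]
  rw [hypDet, ← mul_assoc, mul_one_div,
    div_self (by exact_mod_cast (Nat.factorial_ne_zero n) : (n ! : ℝ) ≠ 0), one_mul]
end
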